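/- Let h be a Hilbert space, ξ ∈ h with h‖ξ‖² ≤ 1 for a real h > 0. Set c = √(1 − h‖ξ‖²), s = √h · |ξ⟩ : ℂ → h, and Q = |ξ'⟩⟨ξ'| the orthogonal projection onto ℂξ (with ξ' = ξ/‖ξ‖, taken to be 0 if ξ = 0). Then the block operator U = [[c, −s*],[s, cQ + Q^⊥]] on ℂ ⊕ h is unitary. -/

import Mathlib

noncomputable section
open ContinuousLinearMap

variable {h : Type*} [NormedAddCommGroup h] [InnerProductSpace ℂ h] [CompleteSpace h]

/-- The Hilbert space `ĥ = ℂ ⊕ h` (with the `ℓ²` direct sum norm). -/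
abbrev hilHat (h : Type*) [NormedAddCommGroup h] [InnerProductSpace ℂ h] :=
  WithLp 2 (ℂ × h)

/-- Block operator `[[a, r],[cv, d]]` on `ℂ ⊕ h`, where `a ∈ B(ℂ) = ℂ`, `r ∈ B(h;ℂ)`,
`cv ∈ B(ℂ;h)`, `d ∈ B(h)`. -/
def blk (a : ℂ) (r : h →L[ℂ] ℂ) (cv : ℂ →L[ℂ] h) (d : h →L[ℂ] h) :
    hilHat h →L[ℂ] hilHat h :=
  let e := WithLp.prodContinuousLinearEquiv 2 ℂ ℂ h
  (e.symm : ℂ × h →L[ℂ] hilHat h) ∘L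
    (((a • ContinuousLinearMap.fst ℂ ℂ h + r ∘L ContinuousLinearMap.snd ℂ ℂ h).prod
      (cv ∘L ContinuousLinearMap.fst ℂ ℂ h + d ∘L ContinuousLinearMap.snd ℂ ℂ h))) ∘L
    (e : hilHat h →L[ℂ] ℂ × h)

/-- The normalisation `ξ' = ξ/‖ξ‖` (equal to `0` when `ξ = 0`). -/
def xiNorm (ξ : h) : h := (‖ξ‖⁻¹ : ℝ) • ξ

/-- The projection `Q_ξ = |ξ'⟩⟨ξ'|` onto `ℂξ`. -/
def Qproj (ξ : h) : h →L[ℂ] h := (innerSL ℂ (xiNorm ξ)).smulRight (xiNorm ξ)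

/-- The block operator `U_ξ^{(t)} = [[c, −s*],[s, cQ + Q^⊥]]` with
`c = √(1 − t‖ξ‖²)`, `s = √t·|ξ⟩`, `Q = Q_ξ`. -/
def Uop (ξ : h) (t : ℝ) : hilHat h →L[ℂ] hilHat h :=
  blk ((Real.sqrt (1 - t * ‖ξ‖ ^ 2) : ℝ) : ℂ)
    (-((Real.sqrt t : ℂ) • (innerSL ℂ ξ)))
    ((Real.sqrt t : ℂ) • ContinuousLinearMap.toSpanSingleton ℂ ξ)
    (((Real.sqrt (1 - t * ‖ξ‖ ^ 2) : ℝ) : ℂ) • Qproj ξ +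
      (ContinuousLinearMap.id ℂ h - Qproj ξ))

-- auxiliary
omit [CompleteSpace h] in
lemma blk_fst (a : ℂ) (r : h →L[ℂ] ℂ) (cv : ℂ →L[ℂ] h) (d : h →L[ℂ] h) (x : hilHat h) :
    (blk a r cv d x).fst = a * x.fst + r x.snd := rfl

omit [CompleteSpace h] in
lemma blk_snd (a : ℂ) (r : h →L[ℂ] ℂ) (cv : ℂ →L[ℂ] h) (d : h →L[ℂ] h) (x : hilHat h) :
    (blk a r cv d x).snd = cv x.fst + d x.snd := rfl

omit [CompleteSpace h] in
lemma hilHat_ext {x y : hilHat h} (h1 : x.fst = y.fst) (h2 : x.snd = y.snd) : x = y :=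
  WithLp.ofLp_injective 2 (Prod.ext h1 h2)

/-- the claimed adjoint of `Uop` -/
def Vop (ξ : h) (t : ℝ) : hilHat h →L[ℂ] hilHat h :=
  blk ((Real.sqrt (1 - t * ‖ξ‖ ^ 2) : ℝ) : ℂ)
    ((Real.sqrt t : ℂ) • (innerSL ℂ ξ))
    (-((Real.sqrt t : ℂ) • ContinuousLinearMap.toSpanSingleton ℂ ξ))
    (((Real.sqrt (1 - t * ‖ξ‖ ^ 2) : ℝ) : ℂ) • Qproj ξ +
      (ContinuousLinearMap.id ℂ h - Qproj ξ))

lemma xiNorm_eq (ξ : h) : xiNorm ξ = ((‖ξ‖⁻¹ : ℝ) : ℂ) • ξ := by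
  rw [xiNorm, Complex.coe_smul]

lemma star_Uop (ξ : h) (t : ℝ) : star (Uop ξ t) = Vop ξ t := by
  rw [star_eq_adjoint]
  symm
  rw [eq_adjoint_iff]
  intro x y
  simp only [Uop, Vop, WithLp.prod_inner_apply, WithLp.ofLp_fst, WithLp.ofLp_snd, blk_fst, blk_snd, Qproj, xiNorm_eq,
    ContinuousLinearMap.add_apply, ContinuousLinearMap.smul_apply, ContinuousLinearMap.neg_apply,
    ContinuousLinearMap.coe_smul', Pi.smul_apply, ContinuousLinearMap.smulRight_apply,
    ContinuousLinearMap.coe_id', id_eq, ContinuousLinearMap.coe_sub', Pi.sub_apply,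
    ContinuousLinearMap.toSpanSingleton_apply, innerSL_apply_apply,
    inner_add_left, inner_add_right, inner_smul_left, inner_smul_right, inner_sub_left,
    inner_sub_right, inner_neg_left, inner_neg_right, smul_smul, smul_eq_mul,
    RCLike.inner_apply, map_mul, map_add, map_neg, Complex.conj_ofReal, map_sub,
    starRingEnd_self_apply, inner_conj_symm]
  ring_nf

set_option maxHeartbeats 1000000 in
lemma Vop_mul_Uop (ξ : h) (t : ℝ) (ht : 0 ≤ t) (hξ : t * ‖ξ‖ ^ 2 ≤ 1) :
    Vop ξ t * Uop ξ t = 1 := by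
  have hst : ((Real.sqrt t : ℝ) : ℂ) * ((Real.sqrt t : ℝ) : ℂ) = (t : ℂ) := by
    norm_cast; exact Real.mul_self_sqrt ht
  have hc2 : ((Real.sqrt (1 - t * ‖ξ‖ ^ 2) : ℝ) : ℂ) * ((Real.sqrt (1 - t * ‖ξ‖ ^ 2) : ℝ) : ℂ)
      = 1 - (t : ℂ) * (‖ξ‖ : ℂ) ^ 2 := by
    have : Real.sqrt (1 - t * ‖ξ‖ ^ 2) * Real.sqrt (1 - t * ‖ξ‖ ^ 2) = 1 - t * ‖ξ‖ ^ 2 :=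
      Real.mul_self_sqrt (by linarith)
    norm_cast
  have hinner : (inner ℂ ξ ξ : ℂ) = ((‖ξ‖ : ℂ)) ^ 2 := inner_self_eq_norm_sq_to_K ξ
  have hker : ∀ w : h, ((‖ξ‖ : ℂ))⁻¹ * ((‖ξ‖ : ℂ))⁻¹ * (inner ℂ ξ w : ℂ) * (‖ξ‖ : ℂ) ^ 2
      = inner ℂ ξ w := by
    intro w
    by_cases hz : ξ = 0
    · simp [hz]
    · have hn : ((‖ξ‖ : ℝ) : ℂ) ≠ 0 := by
        simpa using norm_ne_zero_iff.mpr hz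
      field_simp
  ext x
  refine hilHat_ext ?_ ?_
  · simp only [ContinuousLinearMap.mul_apply, ContinuousLinearMap.one_apply, Uop, Vop,
      blk_fst, blk_snd, Qproj, xiNorm_eq,
      ContinuousLinearMap.add_apply, ContinuousLinearMap.smul_apply,
      ContinuousLinearMap.neg_apply, ContinuousLinearMap.coe_smul', Pi.smul_apply,
      ContinuousLinearMap.smulRight_apply, ContinuousLinearMap.coe_id', id_eq,
      ContinuousLinearMap.coe_sub', Pi.sub_apply, ContinuousLinearMap.toSpanSingleton_apply,
      innerSL_apply_apply, inner_add_right, inner_smul_right, inner_sub_right, inner_neg_right,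
      inner_add_left, inner_smul_left, inner_sub_left, inner_neg_left, Complex.conj_ofReal,
      Complex.ofReal_inv, map_inv₀, smul_smul, smul_eq_mul, hinner]
    ring_nf
    linear_combination (((Real.sqrt (1 - t * ‖ξ‖ ^ 2) : ℝ) : ℂ) * ((Real.sqrt t : ℝ) : ℂ)
      - ((Real.sqrt t : ℝ) : ℂ)) * hker x.snd + x.fst * hc2 + x.fst * ((‖ξ‖ : ℂ)) ^ 2 * hst
  · simp only [ContinuousLinearMap.mul_apply, ContinuousLinearMap.one_apply, Uop, Vop,
      blk_fst, blk_snd, Qproj, xiNorm_eq,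
      ContinuousLinearMap.add_apply, ContinuousLinearMap.smul_apply,
      ContinuousLinearMap.neg_apply, ContinuousLinearMap.coe_smul', Pi.smul_apply,
      ContinuousLinearMap.smulRight_apply, ContinuousLinearMap.coe_id', id_eq,
      ContinuousLinearMap.coe_sub', Pi.sub_apply, ContinuousLinearMap.toSpanSingleton_apply,
      innerSL_apply_apply, inner_add_right, inner_smul_right, inner_sub_right, inner_neg_right,
      inner_add_left, inner_smul_left, inner_sub_left, inner_neg_left, Complex.conj_ofReal,
      Complex.ofReal_inv, map_inv₀, smul_smul, smul_eq_mul, hinner]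
    match_scalars
    · by_cases hz : ξ = 0
      · simp [hz]
      · have hn : ((‖ξ‖ : ℝ) : ℂ) ≠ 0 := by
          simpa using norm_ne_zero_iff.mpr hz
        have hn1 : (‖ξ‖ : ℂ) * ((‖ξ‖ : ℂ))⁻¹ = 1 := mul_inv_cancel₀ hn
        field_simp
        ring_nf
        linear_combination (inner ℂ ξ x.snd : ℂ) * hc2 + (inner ℂ ξ x.snd : ℂ) * ((‖ξ‖ : ℂ)) ^ 2 * hst
    · ring_nf

omit [CompleteSpace h] in
lemma xiNorm_neg (ξ : h) : xiNorm (-ξ) = -xiNorm ξ := by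
  simp [xiNorm]

lemma Vop_eq_Uop_neg (ξ : h) (t : ℝ) : Vop ξ t = Uop (-ξ) t := by
  ext x
  refine hilHat_ext ?_ ?_ <;>
  · simp only [Uop, Vop, blk_fst, blk_snd, Qproj, xiNorm_neg, norm_neg,
      ContinuousLinearMap.add_apply, ContinuousLinearMap.smul_apply,
      ContinuousLinearMap.neg_apply, ContinuousLinearMap.coe_smul', Pi.smul_apply,
      ContinuousLinearMap.smulRight_apply, ContinuousLinearMap.coe_id', id_eq,
      ContinuousLinearMap.coe_sub', Pi.sub_apply, ContinuousLinearMap.toSpanSingleton_apply,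
      innerSL_apply_apply, inner_neg_left, smul_eq_mul, smul_neg, neg_smul, neg_neg, mul_neg]


/-- For `0 < t` with `t‖ξ‖² ≤ 1`, the block operator
`U = [[c, −s*],[s, cQ + Q^⊥]]` on `ℂ ⊕ h` is unitary. -/
theorem stmt1 (ξ : h) (t : ℝ) (ht : 0 < t) (hξ : t * ‖ξ‖ ^ 2 ≤ 1) :
    Uop ξ t ∈ unitary (hilHat h →L[ℂ] hilHat h) := by
  constructor
  · rw [star_Uop]
    exact Vop_mul_Uop ξ t ht.le hξ
  · rw [star_Uop, Vop_eq_Uop_neg]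
    have := Vop_mul_Uop (-ξ) t ht.le (by simpa using hξ)
    rw [Vop_eq_Uop_neg, neg_neg] at this
    exact this
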